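/- If Ψ(b*, q*) ≥ 0 for fixed b* ∈ (0,1) and q* > 0, then Ψ(b*, q) ≥ 0 for all q ≥ q*; that is, q ↦ Ψ(b,q) is monotonically nondecreasing in q for fixed b ∈ (0,1). -/
import Mathlib


noncomputable def psi (z : ℝ) : ℝ :=
  z ^ ((1:ℝ)/3) * ((1 + Real.sqrt (1 - z)) ^ ((1:ℝ)/3) + (1 - Real.sqrt (1 - z)) ^ ((1:ℝ)/3))

noncomputable def zeta (b q : ℝ) : ℝ :=
  (2/9) * (b^2 / ((b+1)*(b+2))) * ((b+q+3)*(b+q+4) / (b+q+2)^2)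

noncomputable def Psi (b q : ℝ) : ℝ :=
  (4/3) * (b / (1 - b)) * ((b+q+1) / (b+q+2)) - 2 * psi (zeta b q) - (psi (zeta b q))^2

lemma psi_cubic (z : ℝ) (hz0 : 0 < z) (hz1 : z ≤ 1) :
    psi z ^ 3 = z * (3 * psi z + 2) ∧ 0 < psi z := by
  set s := Real.sqrt (1 - z) with hs
  have hs0 : 0 ≤ s := Real.sqrt_nonneg _
  have hs1 : s ≤ 1 := by
    have := Real.sq_sqrt (show (0:ℝ) ≤ 1 - z by linarith)
    nlinarith [Real.sqrt_nonneg (1 - z)]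
  have hs2 : s ^ 2 = 1 - z := Real.sq_sqrt (by linarith)
  set u := (1 + s) ^ ((1:ℝ)/3) with hu
  set v := (1 - s) ^ ((1:ℝ)/3) with hv
  set w := z ^ ((1:ℝ)/3) with hw
  have cube : ∀ x : ℝ, 0 ≤ x → (x ^ ((1:ℝ)/3)) ^ 3 = x := by
    intro x hx
    rw [← Real.rpow_natCast (x ^ ((1:ℝ)/3)) 3, ← Real.rpow_mul hx]
    norm_num
  have hu3 : u ^ 3 = 1 + s := cube _ (by linarith)
  have hv3 : v ^ 3 = 1 - s := cube _ (by linarith)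
  have hw3 : w ^ 3 = z := cube _ hz0.le
  have huv : u * v = w := by
    rw [hu, hv, hw, ← Real.mul_rpow (by linarith) (by linarith)]
    congr 1
    nlinarith
  have hupos : 0 < u := Real.rpow_pos_of_pos (by linarith) _
  have hvnn : 0 ≤ v := Real.rpow_nonneg (by linarith) _
  have hwpos : 0 < w := Real.rpow_pos_of_pos hz0 _
  have hpsi : psi z = w * (u + v) := rfl
  constructor
  · rw [hpsi]
    have : (u + v) ^ 3 = u ^ 3 + v ^ 3 + 3 * (u * v) * (u + v) := by ring
    rw [huv] at this
    rw [hu3, hv3] at this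
    calc (w * (u + v)) ^ 3 = w ^ 3 * (u + v) ^ 3 := by ring
      _ = z * (1 + s + (1 - s) + 3 * w * (u + v)) := by rw [hw3, this]
      _ = z * (3 * (w * (u + v)) + 2) := by ring
  · rw [hpsi]
    positivity

lemma psi_mono (z₁ z₂ : ℝ) (h1 : 0 < z₁) (h12 : z₁ ≤ z₂) (h2 : z₂ ≤ 1) :
    psi z₁ ≤ psi z₂ := by
  obtain ⟨hc1, hp1⟩ := psi_cubic z₁ h1 (le_trans h12 h2)
  obtain ⟨hc2, hp2⟩ := psi_cubic z₂ (lt_of_lt_of_le h1 h12) h2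
  by_contra h
  push_neg at h
  set t₁ := psi z₁
  set t₂ := psi z₂
  have hd : 0 < t₁ - t₂ := sub_pos.2 h
  have hkey : t₂ ^ 3 * (3 * t₁ + 2) < t₁ ^ 3 * (3 * t₂ + 2) := by
    nlinarith [mul_pos (mul_pos hp1 hp2) hd, mul_pos hp1 hp2, sq_nonneg (t₁ + t₂),
      sq_nonneg (t₁ - t₂), mul_pos (mul_pos hp1 hp2) (mul_pos hd hd),
      mul_pos hd (mul_pos hp1 hp1), mul_pos hd (mul_pos hp2 hp2)]
  have hA : 0 < (3 * t₁ + 2) * (3 * t₂ + 2) := by nlinarith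
  have hzz := mul_le_mul_of_nonneg_right h12 hA.le
  nlinarith [hkey, hc1, hc2, hzz]

theorem Psi_monotone (b q₀ : ℝ) (hb0 : 0 < b) (hb1 : b < 1) (hq0 : 0 < q₀)
    (hΨ : 0 ≤ Psi b q₀) :
    ∀ q : ℝ, q₀ ≤ q → 0 ≤ Psi b q := by
  intro q hq
  have hqpos : 0 < q := lt_of_lt_of_le hq0 hq
  have hx0 : (0:ℝ) < b + q₀ + 2 := by linarith
  have hx : (0:ℝ) < b + q + 2 := by linarith
  -- zeta bounds
  have hC : (0:ℝ) < (2/9) * (b^2 / ((b+1)*(b+2))) := by positivity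
  have zeta_pos : ∀ r : ℝ, 0 < r → 0 < zeta b r := by
    intro r hr
    have : (0:ℝ) < b + r + 2 := by linarith
    rw [zeta]
    positivity
  have zeta_le_one : ∀ r : ℝ, 0 < r → zeta b r ≤ 1 := by
    intro r hr
    have hxr : (0:ℝ) < b + r + 2 := by linarith
    rw [zeta, div_mul_div_comm, div_mul_div_comm, div_le_one (by positivity)]
    nlinarith [sq_nonneg b, sq_nonneg (b + r), mul_pos hxr hxr, sq_nonneg (b*r)]
  -- zeta decreasing
  have hζ : zeta b q ≤ zeta b q₀ := by
    rw [zeta, zeta]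
    apply mul_le_mul_of_nonneg_left _ hC.le
    rw [div_le_div_iff₀ (by positivity) (by positivity)]
    nlinarith [sq_nonneg (q - q₀), mul_nonneg (sub_nonneg.2 hq) hx0.le]
  have hpsi_le : psi (zeta b q) ≤ psi (zeta b q₀) :=
    psi_mono _ _ (zeta_pos q hqpos) hζ (zeta_le_one q₀ hq0)
  have hpsi_pos : 0 < psi (zeta b q) :=
    (psi_cubic _ (zeta_pos q hqpos) (zeta_le_one q hqpos)).2
  have hpsisq : psi (zeta b q) ^ 2 ≤ psi (zeta b q₀) ^ 2 := by
    apply pow_le_pow_left₀ hpsi_pos.le hpsi_le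
  -- first term monotone
  have hT : (4/3) * (b / (1 - b)) * ((b+q₀+1) / (b+q₀+2)) ≤
      (4/3) * (b / (1 - b)) * ((b+q+1) / (b+q+2)) := by
    apply mul_le_mul_of_nonneg_left _
      (mul_nonneg (by norm_num) (div_nonneg hb0.le (by linarith)))
    rw [div_le_div_iff₀ hx0 hx]
    nlinarith
  rw [Psi] at hΨ ⊢
  linarith
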